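/- For any simple digraph D on {1,…,n} with n ≥ 2, if α ∈ ⟨D⟩ has rank 1 (i.e. α is a constant map), then ℓ(D, α) = n − 1. -/

import Mathlib

noncomputable section

variable {V : Type*}

/-- The arc `(a→b)`: the map sending `a` to `b` and fixing every other point. -/
def arcMap [DecidableEq V] (a b : V) : V → V := fun x => if x = a then b else x

/-- Evaluate a word of arcs, applying the arcs from left to right. -/
def wordEval [DecidableEq V] (w : List (V × V)) : V → V :=
  fun x => w.foldl (fun y e => arcMap e.1 e.2 y) x

/-- `α ∈ ⟨D⟩`: `α` is a (nonempty) product of arcs of the digraph `D`. -/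
def InGen [DecidableEq V] (D : V → V → Prop) (α : V → V) : Prop :=
  ∃ w : List (V × V), w ≠ [] ∧ (∀ e ∈ w, D e.1 e.2) ∧ wordEval w = α

/-- `ℓ(D, α)`: the minimal length of a word in the arcs of `D` expressing `α`. -/
def arcLen [DecidableEq V] (D : V → V → Prop) (α : V → V) : ℕ :=
  sInf {k | ∃ w : List (V × V), w.length = k ∧ (∀ e ∈ w, D e.1 e.2) ∧ wordEval w = α}

/-- `fix(α)`: the number of fixed points of `α`. -/
def fixCnt (α : V → V) : ℕ := Set.ncard {x | α x = x}

/-- `rk(α)`: the rank of `α`, i.e. the cardinality of its image. -/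
def rnk (α : V → V) : ℕ := Set.ncard (Set.range α)

/-- A set `C` is a cyclic orbit of `α` if it is a weakly connected component of the
functional digraph of `α` (edges `(x, α x)`) which is a directed cycle on at least two
vertices: equivalently, `C` is the forward orbit of a periodic point, has at least two
elements, and is closed under taking preimages. -/
def IsCyclicOrbit (α : V → V) (C : Set V) : Prop :=
  2 ≤ C.ncard ∧ (∃ x ∈ C, (∃ k, 0 < k ∧ α^[k] x = x) ∧ C = {y | ∃ k, α^[k] x = y}) ∧
    ∀ y : V, α y ∈ C → y ∈ C

/-- `cycl(α)`: the number of cyclic orbits of `α`. -/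
def cyclCnt (α : V → V) : ℕ := Set.ncard {C : Set V | IsCyclicOrbit α C}

/-- `D` is connected: any two vertices are joined by a directed path in some direction. -/
def ConnectedDigraph (D : V → V → Prop) : Prop :=
  ∀ u v : V, Relation.ReflTransGen D u v ∨ Relation.ReflTransGen D v u

/-- `D` is closed (equal to its closure): whenever `(b,a)` is an edge lying on a directed
cycle of `D` (i.e. there is a directed path from `a` back to `b`), `(a,b)` is also an edge. -/
def ClosedDigraph (D : V → V → Prop) : Prop :=
  ∀ a b : V, D b a → Relation.ReflTransGen D a b → D a b

/-- Property (★): if `v0, v1, v2` is a directed path with `d_D(v0,v2) = 2`, then every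
out-neighbour of `v1` and of `v2` lies in `{v0, v1, v2}`. -/
def StarCond (D : V → V → Prop) : Prop :=
  ∀ v0 v1 v2 : V, D v0 v1 → D v1 v2 → v0 ≠ v2 → ¬ D v0 v2 →
    ∀ u : V, (D v1 u ∨ D v2 u) → (u = v0 ∨ u = v1 ∨ u = v2)

/-- `C` is a strong component of `D`. -/
def IsSC (D : V → V → Prop) (C : Set V) : Prop :=
  ∃ v : V, C = {u | Relation.ReflTransGen D u v ∧ Relation.ReflTransGen D v u}

/-- `C1` connects to `C2`: some edge goes from `C1` to `C2`. -/
def ConnectsTo (D : V → V → Prop) (C1 C2 : Set V) : Prop :=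
  ∃ v1 ∈ C1, ∃ v2 ∈ C2, D v1 v2

/-- `C1` fully connects to `C2`: all pairs are edges. -/
def FullyConnects (D : V → V → Prop) (C1 C2 : Set V) : Prop :=
  ∀ v1 ∈ C1, ∀ v2 ∈ C2, D v1 v2

/-- A terminal strong component: it connects to no other strong component. -/
def IsTerminalSC (D : V → V → Prop) (C : Set V) : Prop :=
  IsSC D C ∧ ∀ C' : Set V, IsSC D C' → C' ≠ C → ¬ ConnectsTo D C C'

/-- Property (★★): nonterminal strong components have at most 2 vertices and terminal
strong components have at most 3 vertices. -/
def StarStarCond (D : V → V → Prop) : Prop :=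
  ∀ C : Set V, IsSC D C →
    (IsTerminalSC D C → C.ncard ≤ 3) ∧ (¬ IsTerminalSC D C → C.ncard ≤ 2)

/-- The induced subdigraph on `C` is an undirected path `a - b - c` on three vertices. -/
def IsP3 (D : V → V → Prop) (C : Set V) : Prop :=
  ∃ a b c : V, a ≠ b ∧ b ≠ c ∧ a ≠ c ∧ C = {a, b, c} ∧
    ∀ u ∈ C, ∀ w ∈ C,
      (D u w ↔ (u = a ∧ w = b) ∨ (u = b ∧ w = a) ∨ (u = b ∧ w = c) ∨ (u = c ∧ w = b))

/-- `D` has a subdigraph isomorphic to `H`: an injection mapping edges of `H` to edges of `D`. -/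
def HasSubdigraph (D : V → V → Prop) {m : ℕ} (H : Fin m → Fin m → Prop) : Prop :=
  ∃ f : Fin m → V, Function.Injective f ∧ ∀ i j : Fin m, H i j → D (f i) (f j)

/-- `Θ_k`: the directed cycle on `k` vertices. -/
def Theta (k : ℕ) : Fin k → Fin k → Prop := fun i j => (j : ℕ) = ((i : ℕ) + 1) % k

/-- `Γ1` (vertices relabelled from `{1,…,5}` to `{0,…,4}`). -/
def Gamma1 : Fin 5 → Fin 5 → Prop := fun i j =>
  ((i : ℕ), (j : ℕ)) ∈ [(0,3),(3,0),(1,3),(3,1),(2,3),(3,2),(3,4)]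

/-- `Γ2` (vertices relabelled from `{1,…,5}` to `{0,…,4}`). -/
def Gamma2 : Fin 5 → Fin 5 → Prop := fun i j =>
  ((i : ℕ), (j : ℕ)) ∈ [(0,2),(2,0),(1,2),(2,1),(2,3),(3,2),(3,4)]

/-- `Γ3` (vertices relabelled from `{1,…,4}` to `{0,…,3}`). -/
def Gamma3 : Fin 4 → Fin 4 → Prop := fun i j =>
  ((i : ℕ), (j : ℕ)) ∈ [(0,1),(1,2),(2,0),(2,3)]

/-- `Γ4` (vertices relabelled from `{1,…,5}` to `{0,…,4}`). -/
def Gamma4 : Fin 5 → Fin 5 → Prop := fun i j =>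
  ((i : ℕ), (j : ℕ)) ∈ [(0,1),(1,2),(2,3),(3,0),(3,4)]

/-- No subdigraph isomorphic to `Γ1`, `Γ2`, `Γ3`, `Γ4` or `Θ_k` for `k ≥ 5`. -/
def ForbiddenFree (D : V → V → Prop) : Prop :=
  ¬ HasSubdigraph D Gamma1 ∧ ¬ HasSubdigraph D Gamma2 ∧ ¬ HasSubdigraph D Gamma3 ∧
    ¬ HasSubdigraph D Gamma4 ∧ ∀ k : ℕ, 5 ≤ k → ¬ HasSubdigraph D (Theta k)

/-- `D` is acyclic: it has no directed cycle. -/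
def AcyclicRel (D : V → V → Prop) : Prop := ∀ v : V, ¬ Relation.TransGen D v v

/-- `ψ_A(u,w)`: the maximal number of edges of a directed path from `u` to `w` in `A`
(in particular `ψ_A(u,u) = 0`). -/
def psiLongest (A : V → V → Prop) (u w : V) : ℕ :=
  sSup {l | ∃ p : List V, p.Chain' A ∧ p.Nodup ∧
    p.head? = some u ∧ p.getLast? = some w ∧ p.length = l + 1}

/-- `d_D(u,w)`: the minimal number of edges of a directed path from `u` to `w` in `D`. -/
def ddist (D : V → V → Prop) (u w : V) : ℕ :=
  sInf {l | ∃ p : List V, p.Chain' D ∧ p.head? = some u ∧ p.getLast? = some w ∧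
    p.length = l + 1}

/-- A tournament: no loops, and exactly one of `(u,v)`, `(v,u)` is an edge for `u ≠ v`. -/
def IsTournament (D : V → V → Prop) : Prop :=
  (∀ v : V, ¬ D v v) ∧ ∀ u v : V, u ≠ v → (D u v ∨ D v u) ∧ ¬ (D u v ∧ D v u)

/-- A strong (strongly connected) digraph. -/
def IsStrongDigraph (D : V → V → Prop) : Prop :=
  ∀ u v : V, Relation.ReflTransGen D u v

section Aux

variable {V : Type*}

lemma wordEval_cons [DecidableEq V] (e : V × V) (w : List (V × V)) (x : V) :
    wordEval (e :: w) x = wordEval w (arcMap e.1 e.2 x) := rfl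

lemma ncard_le_image_arc [DecidableEq V] (a b : V) (S : Set V) (hS : S.Finite) :
    S.ncard ≤ (arcMap a b '' S).ncard + 1 := by
  have hsub : S ⊆ (arcMap a b '' S) ∪ {a} := by
    intro x hx
    by_cases hxa : x = a
    · exact Or.inr (by simp [hxa])
    · exact Or.inl ⟨x, hx, by simp [arcMap, hxa]⟩
  calc S.ncard ≤ ((arcMap a b '' S) ∪ {a}).ncard :=
        Set.ncard_le_ncard hsub ((hS.image _).union (Set.finite_singleton a))
    _ ≤ (arcMap a b '' S).ncard + 1 := by
        simpa [Set.union_singleton] using Set.ncard_insert_le a (arcMap a b '' S)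

lemma ncard_le_eval [DecidableEq V] (w : List (V × V)) (S : Set V) (hS : S.Finite) :
    S.ncard ≤ (wordEval w '' S).ncard + w.length := by
  induction w generalizing S with
  | nil =>
    have hid : wordEval ([] : List (V × V)) = id := rfl
    simp [hid]
  | cons e w ih =>
    have him : wordEval (e :: w) '' S = wordEval w '' (arcMap e.1 e.2 '' S) := by
      rw [Set.image_image]; rfl
    have h1 := ncard_le_image_arc e.1 e.2 S hS
    have h2 := ih (arcMap e.1 e.2 '' S) (hS.image _)
    rw [him]
    simp only [List.length_cons]
    omega

lemma reflTransGen_of_word [DecidableEq V] (D : V → V → Prop) (w : List (V × V))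
    (hw : ∀ e ∈ w, D e.1 e.2) (x : V) : Relation.ReflTransGen D x (wordEval w x) := by
  induction w generalizing x with
  | nil => exact Relation.ReflTransGen.refl
  | cons e w ih =>
    rw [wordEval_cons]
    refine Relation.ReflTransGen.trans ?_ (ih (fun f hf => hw f (List.mem_cons_of_mem _ hf)) _)
    by_cases hxe : x = e.1
    · have : arcMap e.1 e.2 x = e.2 := by simp [arcMap, hxe]
      rw [this]
      have hD : D e.1 e.2 := hw e List.mem_cons_self
      rw [hxe]
      exact Relation.ReflTransGen.single hD
    · have : arcMap e.1 e.2 x = x := by simp [arcMap, hxe]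
      rw [this]

lemma chain_mono_mem {R R' : V → V → Prop} :
    ∀ (l : List V) (x : V), List.Chain R x l → (∀ a b, R a b → b ∈ l → R' a b) →
      List.Chain R' x l
  | [], _, _, _ => List.Chain.nil
  | y :: t, x, h, hm => by
    simp only [List.Chain, List.chain_cons] at h ⊢
    exact ⟨hm _ _ h.1 List.mem_cons_self,
      chain_mono_mem t y h.2 (fun a b hab hb => hm a b hab (List.mem_cons_of_mem _ hb))⟩

lemma build_word [DecidableEq V] (D : V → V → Prop) (c : V) :
    ∀ S : Finset V, c ∉ S →
      (∀ x ∈ S, ∃ l : List V, List.Chain (fun a b => D a b ∧ (b ∈ S ∨ b = c)) x l ∧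
        (x :: l).getLast? = some c) →
      ∃ w : List (V × V), w.length = S.card ∧ (∀ e ∈ w, D e.1 e.2) ∧
        (∀ x ∈ S, wordEval w x = c) ∧ wordEval w c = c := by
  intro S
  induction S using Finset.strongInduction with
  | _ S ih =>
  intro hc hpath
  rcases S.eq_empty_or_nonempty with rfl | hne
  · exact ⟨[], by simp, by simp, by simp, rfl⟩
  set R : V → V → Prop := fun a b => D a b ∧ (b ∈ S ∨ b = c) with hR
  set P : V → ℕ → Prop := fun x k => ∃ l : List V, List.Chain R x l ∧
      (x :: l).getLast? = some c ∧ l.length = k with hP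
  have hPex : ∀ x ∈ S, {k | P x k}.Nonempty := by
    intro x hx
    obtain ⟨l, h1, h2⟩ := hpath x hx
    exact ⟨l.length, l, h1, h2, rfl⟩
  set d : V → ℕ := fun x => sInf {k | P x k} with hdd
  obtain ⟨x0, hx0S, hx0max⟩ := S.exists_max_image d hne
  have hd : ∀ z ∈ S, P z (d z) := fun z hz => Nat.sInf_mem (hPex z hz)
  -- key: x0 does not appear inside any short enough path
  have havoid : ∀ z ∈ S, ∀ l : List V, List.Chain R z l → (z :: l).getLast? = some c →
      l.length ≤ d x0 → x0 ∉ l := by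
    intro z hz l hchain hlast hlen hmem
    obtain ⟨l1, l2, rfl⟩ := List.append_of_mem hmem
    have h2 : List.Chain R x0 l2 := (List.isChain_cons_split.mp hchain).2
    have hlast2 : (x0 :: l2).getLast? = some c := by
      have heq : z :: (l1 ++ x0 :: l2) = (z :: l1) ++ x0 :: l2 := by simp
      rw [heq, List.getLast?_append_cons] at hlast
      exact hlast
    have : d x0 ≤ l2.length := Nat.sInf_le ⟨l2, h2, hlast2, rfl⟩
    have hlen2 : l1.length + (l2.length + 1) ≤ d x0 := by
      simpa [List.length_append] using hlen
    omega
  have hx0c : x0 ≠ c := fun h => hc (h ▸ hx0S)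
  obtain ⟨l0, hl0c, hl0last, hl0len⟩ := hd x0 hx0S
  obtain ⟨y, t, rfl⟩ : ∃ y t, l0 = y :: t := by
    cases l0 with
    | nil => exact absurd (by simpa using hl0last) hx0c
    | cons y t => exact ⟨y, t, rfl⟩
  simp only [List.Chain, List.chain_cons] at hl0c
  have hx0nl : x0 ∉ y :: t := havoid x0 hx0S _ (List.chain_cons.mpr hl0c) hl0last (le_of_eq hl0len)
  have hyx0 : y ≠ x0 := fun h => hx0nl (h ▸ List.mem_cons_self)
  have hyS : y ∈ S ∨ y = c := hl0c.1.2
  set S' := S.erase x0 with hS'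
  have hcS' : c ∉ S' := fun h => hc (Finset.mem_of_mem_erase h)
  have hpath' : ∀ z ∈ S', ∃ l : List V,
      List.Chain (fun a b => D a b ∧ (b ∈ S' ∨ b = c)) z l ∧ (z :: l).getLast? = some c := by
    intro z hz
    have hzS : z ∈ S := Finset.mem_of_mem_erase hz
    obtain ⟨l, hlc, hllast, hllen⟩ := hd z hzS
    have hnx0 : x0 ∉ l := havoid z hzS l hlc hllast (hllen ▸ hx0max z hzS)
    refine ⟨l, chain_mono_mem l z hlc ?_, hllast⟩
    intro a b hab hb
    refine ⟨hab.1, ?_⟩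
    rcases hab.2 with hbS | hbc
    · exact Or.inl (Finset.mem_erase.mpr ⟨fun h => hnx0 (h ▸ hb), hbS⟩)
    · exact Or.inr hbc
  obtain ⟨w', hw'len, hw'D, hw'ev, hw'c⟩ :=
    ih S' (Finset.erase_ssubset hx0S) hcS' hpath'
  refine ⟨(x0, y) :: w', ?_, ?_, ?_, ?_⟩
  · simp [hw'len, hS', Finset.card_erase_of_mem hx0S]
    have := Finset.card_pos.mpr hne
    omega
  · intro e he
    rcases List.mem_cons.mp he with rfl | he'
    · exact hl0c.1.1
    · exact hw'D e he'
  · intro x hx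
    rw [wordEval_cons]
    by_cases hxx0 : x = x0
    · have harc : arcMap x0 y x = y := by simp [arcMap, hxx0]
      rw [harc]
      rcases hyS with hyS | rfl
      · exact hw'ev y (Finset.mem_erase.mpr ⟨hyx0, hyS⟩)
      · exact hw'c
    · have harc : arcMap x0 y x = x := by simp [arcMap, hxx0]
      rw [harc]
      exact hw'ev x (Finset.mem_erase.mpr ⟨hxx0, hx⟩)
  · rw [wordEval_cons]
    have harc : arcMap x0 y c = c := by simp [arcMap, Ne.symm hx0c]
    rw [harc]
    exact hw'c

end Aux

/-- for any simple digraph `D` on `{1,…,n}` with `n ≥ 2`, if `α ∈ ⟨D⟩` has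
rank `1`, then `ℓ(D, α) = n − 1`. -/
theorem stmt3 (n : ℕ) (hn : 2 ≤ n) (D : Fin n → Fin n → Prop) (hloop : ∀ v, ¬ D v v)
    (α : Fin n → Fin n) (hα : InGen D α) (hrk : rnk α = 1) :
    arcLen D α = n - 1 := by
  obtain ⟨c, hc⟩ := Set.ncard_eq_one.mp hrk
  have hαc : ∀ x, α x = c := by
    intro x
    have : α x ∈ Set.range α := Set.mem_range_self x
    rw [hc] at this
    exact this
  obtain ⟨w0, _, hw0D, hw0ev⟩ := hα
  have hreach : ∀ x : Fin n, Relation.ReflTransGen D x c := by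
    intro x
    have := reflTransGen_of_word D w0 hw0D x
    rwa [hw0ev, hαc x] at this
  set S : Finset (Fin n) := Finset.univ.erase c with hS
  have hcS : c ∉ S := Finset.notMem_erase c _
  have hScard : S.card = n - 1 := by
    simp [hS, Finset.card_erase_of_mem (Finset.mem_univ c)]
  have hpath : ∀ x ∈ S, ∃ l : List (Fin n),
      List.Chain (fun a b => D a b ∧ (b ∈ S ∨ b = c)) x l ∧ (x :: l).getLast? = some c := by
    intro x _
    obtain ⟨l, hlc, hll⟩ := List.exists_isChain_cons_of_relationReflTransGen (hreach x)
    refine ⟨l, ?_, ?_⟩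
    · refine chain_mono_mem l x hlc ?_
      intro a b hab _
      refine ⟨hab, ?_⟩
      by_cases hbc : b = c
      · exact Or.inr hbc
      · exact Or.inl (Finset.mem_erase.mpr ⟨hbc, Finset.mem_univ b⟩)
    · rw [List.getLast?_eq_getLast (List.cons_ne_nil _ _), hll]
  obtain ⟨w, hwlen, hwD, hwev, hwc⟩ := build_word D c S hcS hpath
  have hweval : wordEval w = α := by
    funext x
    by_cases hxc : x = c
    · rw [hxc, hwc, hαc]
    · rw [hwev x (Finset.mem_erase.mpr ⟨hxc, Finset.mem_univ x⟩), hαc]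
  set T : Set ℕ := {k | ∃ v : List (Fin n × Fin n), v.length = k ∧
      (∀ e ∈ v, D e.1 e.2) ∧ wordEval v = α} with hT
  have hmem : (n - 1) ∈ T := ⟨w, hwlen ▸ hScard ▸ rfl, hwD, hweval⟩
  have hlb : ∀ k ∈ T, n - 1 ≤ k := by
    rintro k ⟨v, rfl, hvD, hvev⟩
    have h := ncard_le_eval v (Set.univ : Set (Fin n)) (Set.finite_univ)
    rw [Set.image_univ, hvev] at h
    have h1 : (Set.range α).ncard = 1 := hrk
    have h2 : (Set.univ : Set (Fin n)).ncard = n := by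
      simp [Set.ncard_univ]
    omega
  have hmemT : (n - 1) ∈ T := by
    rcases hmem with ⟨v, hv1, hv2, hv3⟩
    exact ⟨v, by omega, hv2, hv3⟩
  refine le_antisymm (Nat.sInf_le hmemT) ?_
  exact hlb _ (Nat.sInf_mem ⟨_, hmemT⟩)
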